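/- arXiv:1911.09909 — 3 statements merged into one kernel-verified Lean document; each statement's English description precedes it below -/
import Mathlib

section
/- Every oriented graph whose underlying simple graph G satisfies mad(G) < 3 admits a pushable homomorphism to the Paley tournament Pal_7. -/
/-- An oriented graph: a loopless directed graph without opposite arcs. -/
structure OrientedGraph (V : Type*) where
  adj : V → V → Prop
  irrefl' : ∀ v, ¬ adj v v
  asymm' : ∀ u v, adj u v → ¬ adj v u

namespace OrientedGraph

variable {V W : Type*}

/-- Pushing a set `S` of vertices reverses every arc with exactly one endpoint in `S`. -/
def push (G : OrientedGraph V) (S : Set V) : OrientedGraph V where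
  adj u v := ((u ∈ S ↔ v ∈ S) ∧ G.adj u v) ∨ (¬(u ∈ S ↔ v ∈ S) ∧ G.adj v u)
  irrefl' v := by
    rintro (⟨_, h⟩ | ⟨h, _⟩)
    · exact G.irrefl' v h
    · exact h Iff.rfl
  asymm' u v := by
    rintro (⟨h1, h2⟩ | ⟨h1, h2⟩) (⟨h3, h4⟩ | ⟨h3, h4⟩)
    · exact G.asymm' u v h2 h4
    · exact h3 h1.symm
    · exact h1 h3.symm
    · exact G.asymm' v u h2 h4

/-- A homomorphism of oriented graphs. -/
def IsHom (G : OrientedGraph V) (H : OrientedGraph W) (f : V → W) : Prop :=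
  ∀ u v, G.adj u v → H.adj (f u) (f v)

/-- A pushable homomorphism: a homomorphism from some graph obtained from `G`
by pushing a set of vertices. -/
def IsPushableHom (G : OrientedGraph V) (H : OrientedGraph W) (f : V → W) : Prop :=
  ∃ S : Set V, IsHom (G.push S) H f

/-- The underlying (simple) undirected graph of an oriented graph. -/
def toSimpleGraph (G : OrientedGraph V) : SimpleGraph V where
  Adj u v := G.adj u v ∨ G.adj v u
  symm := ⟨fun _ _ h => Or.symm h⟩
  loopless := ⟨fun v h => h.elim (G.irrefl' v) (G.irrefl' v)⟩

/-- The oriented chromatic number: the least order of an oriented graph that `G`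
admits a homomorphism to. -/
noncomputable def orientedChromatic (G : OrientedGraph V) : ℕ :=
  sInf {n | ∃ (H : OrientedGraph (Fin n)) (f : V → Fin n), IsHom G H f}

/-- The pushable chromatic number: the least order of an oriented graph that `G`
admits a pushable homomorphism to. -/
noncomputable def pushableChromatic (G : OrientedGraph V) : ℕ :=
  sInf {n | ∃ (H : OrientedGraph (Fin n)) (f : V → Fin n), IsPushableHom G H f}

/-- `signedAdj C true u w` means `w ∈ N⁺(u)`; `signedAdj C false u w` means `w ∈ N⁻(u)`. -/
def signedAdj (C : OrientedGraph V) : Bool → V → V → Prop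
  | true, u, w => C.adj u w
  | false, u, w => C.adj w u

/-- The `s`-neighborhood of a set of vertices. -/
def signedNbhd (C : OrientedGraph V) (s : Bool) (S : Set V) : Set V :=
  {w | ∃ u ∈ S, C.signedAdj s u w}

/-- The set `N^a(J)` for a sign vector `a` and a tuple `v` of vertices. -/
def NSet (C : OrientedGraph V) {j : ℕ} (a : Fin j → Bool) (v : Fin j → V) : Set V :=
  {w | (∀ i, C.signedAdj (a i) (v i) w) ∨ (∀ i, C.signedAdj (!(a i)) (v i) w)}

/-- Property `P(j,k)`: for every sign vector `a ∈ {+,-}^j` and every set of `j`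
distinct vertices, `|N^a(J)| ≥ k`. -/
def HasPropP (C : OrientedGraph V) (j k : ℕ) : Prop :=
  ∀ (a : Fin j → Bool) (v : Fin j → V), Function.Injective v → k ≤ (C.NSet a v).ncard

end OrientedGraph

/-- The Paley tournament on `ZMod 7`: `ij` is an arc iff `j - i ∈ {1, 2, 4}`. -/
def Pal7 : OrientedGraph (ZMod 7) where
  adj i j := j - i = 1 ∨ j - i = 2 ∨ j - i = 4
  irrefl' := by decide
  asymm' := by decide

/-- `mad(G) < 3`: every nonempty subgraph `H` satisfies `2|E(H)|/|V(H)| < 3`. -/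
def MadLT3 {V : Type*} (G : SimpleGraph V) : Prop :=
  ∀ H : G.Subgraph, H.verts.Nonempty → 2 * H.edgeSet.ncard < 3 * H.verts.ncard

/-- Degeneracy at most `d`: every nonempty set of vertices contains a vertex with
at most `d` neighbors inside the set. -/
def DegeneracyLE {V : Type*} (G : SimpleGraph V) (d : ℕ) : Prop :=
  ∀ s : Set V, s.Nonempty → ∃ v ∈ s, (s ∩ G.neighborSet v).ncard ≤ d
namespace PP
open Finset

/-! ### Finite facts about the anti-twinned Paley tournament, by `decide` -/

abbrev C := ZMod 7 × Bool

def palB (i j : ZMod 7) : Bool := (j - i == 1) || (j - i == 2) || (j - i == 4)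

def atB (X Y : C) : Bool := if X.2 == Y.2 then palB X.1 Y.1 else palB Y.1 X.1

def cstB (b : Bool) (A X : C) : Bool := if b then atB A X else atB X A

def Nb (b : Bool) (A : C) : Finset C := Finset.univ.filter (fun X => cstB b A X = true)

def Nb2 (b1 b2 : Bool) (A B : C) : Finset C := Nb b1 A ∩ Nb b2 B

def BadSet (b1 b2 : Bool) (Z : C) : Finset C :=
  Finset.univ.filter (fun X => Nb2 b1 b2 X Z = ∅)

instance : DecidableRel Pal7.adj := fun i j =>
  inferInstanceAs (Decidable (j - i = 1 ∨ j - i = 2 ∨ j - i = 4))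

lemma pal_iff : ∀ i j, Pal7.adj i j ↔ palB i j = true := by decide

lemma F0 : ∀ (b : Bool) (A : C), (Nb b A).card = 6 := by decide

lemma F2 : ∀ (b1 b2 : Bool) (A B : C), (Nb2 b1 b2 A B).Nonempty →
    2 ≤ (Nb2 b1 b2 A B).card := by decide

lemma F3 : ∀ (b1 b2 : Bool) (Z : C), (BadSet b1 b2 Z).card ≤ 1 := by decide

lemma cardC : (Finset.univ : Finset C).card = 14 := by decide

lemma mem_Nb {b : Bool} {A X : C} : X ∈ Nb b A ↔ cstB b A X = true := by
  simp [Nb]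

lemma mem_Nb2 {b1 b2 : Bool} {A B X : C} :
    X ∈ Nb2 b1 b2 A B ↔ (cstB b1 A X = true ∧ cstB b2 B X = true) := by
  simp [Nb2, Nb, Finset.mem_inter]

lemma Nb_nonempty (b : Bool) (A : C) : (Nb b A).Nonempty := by
  rw [← Finset.card_pos, F0]; norm_num

/-- Key selection lemma: choose a colour `X` in a big enough list `L`
avoiding all the "bad" colours coming from pending degree-2 constraints. -/
lemma exists_good {ι : Type*} [DecidableEq ι] (T : Finset ι) (b1 b2 : ι → Bool)
    (Z : ι → C) (L : Finset C) (hcard : T.card < L.card) :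
    ∃ X ∈ L, ∀ w ∈ T, ∃ Y : C,
      cstB (b1 w) X Y = true ∧ cstB (b2 w) (Z w) Y = true := by
  set B := T.biUnion (fun w => BadSet (b1 w) (b2 w) (Z w)) with hB
  have hBcard : B.card ≤ T.card := by
    refine le_trans (Finset.card_biUnion_le) (le_trans
      (Finset.sum_le_sum (fun w _ => F3 (b1 w) (b2 w) (Z w))) ?_)
    simp
  have hnot : ¬ (L ⊆ B) := fun hsub => by
    have := Finset.card_le_card hsub
    omega
  obtain ⟨X, hXL, hXB⟩ := Finset.not_subset.mp hnot
  refine ⟨X, hXL, fun w hw => ?_⟩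
  have hnm : X ∉ BadSet (b1 w) (b2 w) (Z w) :=
    fun hmem => hXB (Finset.mem_biUnion.mpr ⟨w, hw, hmem⟩)
  have hne : Nb2 (b1 w) (b2 w) X (Z w) ≠ ∅ := by
    intro he
    exact hnm (Finset.mem_filter.mpr ⟨Finset.mem_univ X, he⟩)
  obtain ⟨Y, hY⟩ := Finset.nonempty_iff_ne_empty.mpr hne
  exact ⟨Y, (mem_Nb2.mp hY).1, (mem_Nb2.mp hY).2⟩

end PP

namespace PP
open Finset

attribute [local instance] Classical.propDecidable

variable {V : Type} [Fintype V] (G : OrientedGraph V)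

/-- The constraint imposed on colours `A` of `p` and `X` of `q` by the (potential)
arc between `p` and `q`. -/
def Ed (p q : V) (A X : C) : Prop :=
  (G.adj p q → atB A X = true) ∧ (G.adj q p → atB X A = true)

omit [Fintype V] in
lemma ed_bool {p q : V} (h : G.toSimpleGraph.Adj p q) :
    ∃ b : Bool, ∀ A X : C, Ed G p q A X ↔ cstB b A X = true := by
  rcases h with h | h
  · refine ⟨true, fun A X => ⟨fun he => ?_, fun hc => ⟨fun _ => ?_, fun h' =>
      absurd h' (G.asymm' p q h)⟩⟩⟩
    · simpa [cstB] using he.1 h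
    · simpa [cstB] using hc
  · refine ⟨false, fun A X => ⟨fun he => ?_, fun hc => ⟨fun h' =>
      absurd h' (G.asymm' q p h), fun _ => ?_⟩⟩⟩
    · simpa [cstB] using he.2 h
    · simpa [cstB] using hc

noncomputable def degS (s : Finset V) (x : V) : ℕ :=
  (s.filter (fun y => G.toSimpleGraph.Adj x y)).card

noncomputable def tS (s : Finset V) (u : V) : ℕ :=
  (s.filter (fun y => G.toSimpleGraph.Adj u y ∧ degS G s y = 2)).card

omit [Fintype V] in
lemma two_nbrs {s : Finset V} {w u : V} (hw : degS G s w = 2) (hus : u ∈ s)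
    (hadj : G.toSimpleGraph.Adj w u) :
    ∃ z, z ∈ s ∧ G.toSimpleGraph.Adj w z ∧ z ≠ u ∧
      ∀ q ∈ s, G.toSimpleGraph.Adj w q → q = u ∨ q = z := by
  unfold degS at hw
  obtain ⟨a, b, hab, hN⟩ := Finset.card_eq_two.mp hw
  have hmem : ∀ q, q ∈ s → G.toSimpleGraph.Adj w q → q = a ∨ q = b := by
    intro q hq hq2
    have : q ∈ ({a, b} : Finset V) := hN ▸ Finset.mem_filter.mpr ⟨hq, hq2⟩
    simpa using this
  have hmem' : ∀ q, q ∈ ({a, b} : Finset V) → q ∈ s ∧ G.toSimpleGraph.Adj w q := by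
    intro q hq
    rw [← hN] at hq
    exact Finset.mem_filter.mp hq
  rcases hmem u hus hadj with rfl | rfl
  · obtain ⟨hbs, hbadj⟩ := hmem' b (by simp)
    exact ⟨b, hbs, hbadj, Ne.symm hab, fun q hq hq2 => (hmem q hq hq2)⟩
  · obtain ⟨has, haadj⟩ := hmem' a (by simp)
    exact ⟨a, has, haadj, hab, fun q hq hq2 => (hmem q hq hq2).symm⟩

end PP

namespace PP
open Finset

attribute [local instance] Classical.propDecidable

variable {V : Type} [Fintype V] (G : OrientedGraph V)

lemma sum_deg_lt (hmad : MadLT3 G.toSimpleGraph) (s : Finset V) (hs : s.Nonempty) :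
    ∑ x ∈ s, degS G s x < 3 * s.card := by
  classical
  set Gs : SimpleGraph V :=
    { Adj := fun x y => x ∈ s ∧ y ∈ s ∧ G.toSimpleGraph.Adj x y
      symm := ⟨fun x y h => ⟨h.2.1, h.1, h.2.2.symm⟩⟩
      loopless := ⟨fun x h => G.toSimpleGraph.loopless.irrefl x h.2.2⟩ } with hGs
  have hdeg : ∀ x ∈ s, Gs.degree x = degS G s x := by
    intro x hx
    unfold SimpleGraph.degree degS
    congr 1
    ext y
    simp [SimpleGraph.mem_neighborFinset, hGs, hx]
  set H : G.toSimpleGraph.Subgraph :=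
    { verts := ↑s
      Adj := Gs.Adj
      adj_sub := fun h => h.2.2
      edge_vert := fun h => h.1
      symm := Gs.symm } with hH
  have hedge : H.edgeSet = Gs.edgeSet := by
    ext e
    induction e using Sym2.ind with
    | _ x y => simp [SimpleGraph.Subgraph.mem_edgeSet, SimpleGraph.mem_edgeSet, hH]
  have hkey := hmad H (by simpa [hH] using hs)
  have hcard : H.verts.ncard = s.card := by simp [hH, Set.ncard_coe_finset]
  have hncard : H.edgeSet.ncard = Gs.edgeFinset.card := by
    rw [hedge, ← SimpleGraph.coe_edgeFinset, Set.ncard_coe_finset]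
  have hhs : ∑ x, Gs.degree x = 2 * Gs.edgeFinset.card :=
    SimpleGraph.sum_degrees_eq_twice_card_edges Gs
  have hzero : ∀ x ∈ (Finset.univ : Finset V), x ∉ s → Gs.degree x = 0 := by
    intro x _ hx
    simp only [SimpleGraph.degree, Finset.card_eq_zero]
    ext y
    simp [SimpleGraph.mem_neighborFinset, hGs, hx]
  have hsum : ∑ x ∈ s, degS G s x = ∑ x, Gs.degree x := by
    rw [← Finset.sum_subset (Finset.subset_univ s) hzero]
    exact Finset.sum_congr rfl (fun x hx => (hdeg x hx).symm)
  rw [hsum, hhs, ← hncard]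
  rw [hcard] at hkey
  exact hkey

omit [Fintype V] in
lemma double_count (A B : Finset V) :
    ∑ u ∈ A, (B.filter (fun y => G.toSimpleGraph.Adj u y)).card
      = ∑ x ∈ B, (A.filter (fun y => G.toSimpleGraph.Adj x y)).card := by
  simp_rw [Finset.card_filter]
  rw [Finset.sum_comm]
  refine Finset.sum_congr rfl fun x _ => Finset.sum_congr rfl fun u _ => ?_
  simp_rw [SimpleGraph.adj_comm]

omit [Fintype V] in
lemma exists_config (s : Finset V)
    (hsum : ∑ x ∈ s, degS G s x < 3 * s.card)
    (h2 : ∀ x ∈ s, 2 ≤ degS G s x)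
    (hno2 : ∀ x ∈ s, ∀ y ∈ s, G.toSimpleGraph.Adj x y →
      degS G s x = 2 → degS G s y = 2 → False) :
    ∃ u ∈ s, 3 ≤ degS G s u ∧ 2 * degS G s u ≤ tS G s u + 5 := by
  by_contra hcon
  push_neg at hcon
  set s2 := s.filter (fun x => degS G s x = 2) with hs2
  set s3 := s.filter (fun x => ¬ degS G s x = 2) with hs3
  have ht : ∀ u : V, tS G s u = (s2.filter (fun y => G.toSimpleGraph.Adj u y)).card := by
    intro u
    unfold tS
    congr 1
    rw [hs2, Finset.filter_filter]
    apply Finset.filter_congr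
    intro y _
    constructor
    · rintro ⟨h1, h2⟩; exact ⟨h2, h1⟩
    · rintro ⟨h1, h2⟩; exact ⟨h2, h1⟩
  have hkey1 : ∀ x ∈ s2, (s3.filter (fun y => G.toSimpleGraph.Adj x y)).card = 2 := by
    intro x hx
    rw [hs2, Finset.mem_filter] at hx
    rcases hx with ⟨hxs, hx2⟩
    have hfe : s.filter (fun y => G.toSimpleGraph.Adj x y)
        = s3.filter (fun y => G.toSimpleGraph.Adj x y) := by
      rw [hs3, Finset.filter_filter]
      apply Finset.filter_congr
      intro y hy
      constructor
      · intro hadj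
        refine ⟨fun hy2 => hno2 x hxs y hy hadj hx2 hy2, hadj⟩
      · rintro ⟨_, hadj⟩; exact hadj
    unfold degS at hx2
    rw [hfe] at hx2
    exact hx2
  have hdc : ∑ u ∈ s3, tS G s u = 2 * s2.card := by
    calc ∑ u ∈ s3, tS G s u
        = ∑ u ∈ s3, (s2.filter (fun y => G.toSimpleGraph.Adj u y)).card :=
          Finset.sum_congr rfl (fun u _ => ht u)
      _ = ∑ x ∈ s2, (s3.filter (fun y => G.toSimpleGraph.Adj x y)).card :=
          double_count G s3 s2
      _ = ∑ x ∈ s2, 2 := Finset.sum_congr rfl hkey1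
      _ = 2 * s2.card := by rw [Finset.sum_const, smul_eq_mul, mul_comm]
  have hstep : ∀ u ∈ s3, tS G s u + 6 ≤ 2 * degS G s u := by
    intro u hu
    rw [hs3, Finset.mem_filter] at hu
    have hd3 : 3 ≤ degS G s u := by
      have := h2 u hu.1
      omega
    have := hcon u hu.1 hd3
    omega
  have hsum3 : ∑ u ∈ s3, (tS G s u + 6) ≤ ∑ u ∈ s3, 2 * degS G s u :=
    Finset.sum_le_sum hstep
  rw [Finset.sum_add_distrib, hdc, Finset.sum_const, ← Finset.mul_sum] at hsum3
  have hsplit : ∑ x ∈ s, degS G s x = ∑ x ∈ s2, degS G s x + ∑ x ∈ s3, degS G s x := by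
    rw [hs2, hs3, Finset.sum_filter_add_sum_filter_not]
  have hs2sum : ∑ x ∈ s2, degS G s x = 2 * s2.card := by
    rw [Finset.sum_congr rfl (fun x hx => (Finset.mem_filter.mp hx).2), Finset.sum_const]
    rw [smul_eq_mul, mul_comm]
  have hcards : s2.card + s3.card = s.card := by
    rw [hs2, hs3]
    exact Finset.card_filter_add_card_filter_not _
  have h3sum : s2.card + 3 * s3.card ≤ ∑ u ∈ s3, degS G s u := by
    simp only [smul_eq_mul] at hsum3
    omega
  rw [hsplit, hs2sum] at hsum
  omega

end PP

namespace PP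
open Finset

attribute [local instance] Classical.propDecidable

variable {V : Type} [Fintype V] (G : OrientedGraph V)

theorem colorable (hmad : MadLT3 G.toSimpleGraph) :
    ∀ (n : ℕ) (s : Finset V), s.card ≤ n →
      ∃ h : V → C, ∀ p ∈ s, ∀ q ∈ s, G.adj p q → atB (h p) (h q) = true := by
  intro n
  induction n with
  | zero =>
    intro s hs
    refine ⟨fun _ => ((0 : ZMod 7), false), fun p hp q hq hpq => ?_⟩
    rw [Nat.le_zero, Finset.card_eq_zero] at hs
    subst hs
    exact absurd hp (Finset.notMem_empty p)
  | succ n IH =>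
    intro s hcard
    by_cases hsmall : s.card ≤ n
    · exact IH s hsmall
    have hscard : s.card = n + 1 := by omega
    have hne : s.Nonempty := Finset.card_pos.mp (by omega)
    by_cases hA : ∃ v ∈ s, degS G s v ≤ 1
    · -- Reduction A : a vertex of degree at most 1
      obtain ⟨v, hvs, hvd⟩ := hA
      have hcard' : (s.erase v).card ≤ n := by
        rw [Finset.card_erase_of_mem hvs]; omega
      obtain ⟨h, hh⟩ := IH (s.erase v) hcard'
      by_cases hd0 : degS G s v = 0
      · refine ⟨h, fun p hp q hq hpq => ?_⟩
        have hnadj : ∀ x ∈ s, ¬ G.toSimpleGraph.Adj v x := by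
          intro x hx hadj
          have hm : x ∈ s.filter (fun y => G.toSimpleGraph.Adj v y) :=
            Finset.mem_filter.mpr ⟨hx, hadj⟩
          unfold degS at hd0
          rw [Finset.card_eq_zero] at hd0
          rw [hd0] at hm
          exact absurd hm (Finset.notMem_empty x)
        have hpv : p ≠ v := fun he => hnadj q hq (Or.inl (he ▸ hpq))
        have hqv : q ≠ v := fun he => hnadj p hp (Or.inr (he ▸ hpq))
        exact hh p (Finset.mem_erase.mpr ⟨hpv, hp⟩) q (Finset.mem_erase.mpr ⟨hqv, hq⟩) hpq
      · have hd1 : degS G s v = 1 := by omega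
        unfold degS at hd1
        obtain ⟨y, hy⟩ := Finset.card_eq_one.mp hd1
        have hym : y ∈ s ∧ G.toSimpleGraph.Adj v y := by
          have : y ∈ s.filter (fun y => G.toSimpleGraph.Adj v y) :=
            hy ▸ Finset.mem_singleton_self y
          exact Finset.mem_filter.mp this
        have huniq : ∀ q ∈ s, G.toSimpleGraph.Adj v q → q = y := by
          intro q hq hadj
          have : q ∈ s.filter (fun y => G.toSimpleGraph.Adj v y) :=
            Finset.mem_filter.mpr ⟨hq, hadj⟩
          rw [hy] at this
          simpa using this
        obtain ⟨b, hb⟩ := ed_bool G hym.2.symm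
        obtain ⟨X, hX⟩ := Nb_nonempty b (h y)
        have hEd : Ed G y v (h y) X := (hb (h y) X).mpr (mem_Nb.mp hX)
        have hyv : y ≠ v := fun he => G.toSimpleGraph.loopless.irrefl v (he ▸ hym.2)
        refine ⟨fun x => if x = v then X else h x, fun p hp q hq hpq => ?_⟩
        by_cases hpv : p = v
        · subst hpv
          have hq' : q = y := huniq q hq (Or.inl hpq)
          subst hq'
          simp only [if_pos rfl, if_neg hyv]
          exact hEd.2 hpq
        · by_cases hqv : q = v
          · subst hqv
            have hp' : p = y := huniq p hp (Or.inr hpq)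
            subst hp'
            simp only [if_pos rfl, if_neg hyv]
            exact hEd.1 hpq
          · simp only [if_neg hpv, if_neg hqv]
            exact hh p (Finset.mem_erase.mpr ⟨hpv, hp⟩) q
              (Finset.mem_erase.mpr ⟨hqv, hq⟩) hpq
    · push_neg at hA
      by_cases hB : ∃ v ∈ s, ∃ w ∈ s,
          G.toSimpleGraph.Adj v w ∧ degS G s v = 2 ∧ degS G s w = 2
      · -- Reduction B : two adjacent vertices of degree 2
        obtain ⟨v, hvs, w, hws, hadjvw, hdv, hdw⟩ := hB
        have hwv : w ≠ v := hadjvw.ne'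
        obtain ⟨a, has, hva, haw, hvnbrs⟩ := two_nbrs G hdv hws hadjvw
        obtain ⟨b, hbs, hwb, hbv, hwnbrs⟩ := two_nbrs G hdw hvs hadjvw.symm
        have hav : a ≠ v := hva.ne'
        have hbw : b ≠ w := hwb.ne'
        have hcard'' : ((s.erase v).erase w).card ≤ n :=
          le_trans (Finset.card_le_card (Finset.erase_subset _ _))
            (by rw [Finset.card_erase_of_mem hvs]; omega)
        obtain ⟨h, hh⟩ := IH ((s.erase v).erase w) hcard''
        have hbs'' : b ∈ (s.erase v).erase w :=
          Finset.mem_erase.mpr ⟨hbw, Finset.mem_erase.mpr ⟨hbv, hbs⟩⟩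
        have has'' : a ∈ (s.erase v).erase w :=
          Finset.mem_erase.mpr ⟨haw, Finset.mem_erase.mpr ⟨hav, has⟩⟩
        obtain ⟨bb, hbb⟩ := ed_bool G hwb.symm
        obtain ⟨bw2, hbw2⟩ := ed_bool G hadjvw.symm
        obtain ⟨ba, hba⟩ := ed_bool G hva.symm
        obtain ⟨Y, hYL, hYT⟩ := exists_good ({()} : Finset Unit) (fun _ => bw2)
          (fun _ => ba) (fun _ => h a) (Nb bb (h b)) (by rw [F0]; simp)
        obtain ⟨Z, hZ1, hZ2⟩ := hYT () (Finset.mem_singleton_self ())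
        have EdWV : Ed G w v Y Z := (hbw2 Y Z).mpr hZ1
        have EdAV : Ed G a v (h a) Z := (hba (h a) Z).mpr hZ2
        have EdBW : Ed G b w (h b) Y := (hbb (h b) Y).mpr (mem_Nb.mp hYL)
        refine ⟨fun x => if x = v then Z else if x = w then Y else h x,
          fun p hp q hq hpq => ?_⟩
        by_cases hpv : p = v
        · subst hpv
          rcases hvnbrs q hq (Or.inl hpq) with rfl | rfl
          · simp only [if_pos rfl, if_neg hwv]
            exact EdWV.2 hpq
          · simp only [if_pos rfl, if_neg hav, if_neg haw]
            exact EdAV.2 hpq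
        · by_cases hqv : q = v
          · subst hqv
            rcases hvnbrs p hp (Or.inr hpq) with rfl | rfl
            · simp only [if_pos rfl, if_neg hwv]
              exact EdWV.1 hpq
            · simp only [if_pos rfl, if_neg hav, if_neg haw]
              exact EdAV.1 hpq
          · by_cases hpw : p = w
            · subst hpw
              rcases hwnbrs q hq (Or.inl hpq) with rfl | rfl
              · exact absurd rfl hqv
              · simp only [if_pos rfl, if_neg hwv, if_neg hbv, if_neg hbw]
                exact EdBW.2 hpq
            · by_cases hqw : q = w
              · subst hqw
                rcases hwnbrs p hp (Or.inr hpq) with rfl | rfl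
                · exact absurd rfl hpv
                · simp only [if_pos rfl, if_neg hwv, if_neg hbv, if_neg hbw]
                  exact EdBW.1 hpq
              · simp only [if_neg hpv, if_neg hqv, if_neg hpw, if_neg hqw]
                exact hh p (Finset.mem_erase.mpr ⟨hpw, Finset.mem_erase.mpr ⟨hpv, hp⟩⟩)
                  q (Finset.mem_erase.mpr ⟨hqw, Finset.mem_erase.mpr ⟨hqv, hq⟩⟩) hpq
      · -- Reduction C : the discharging configuration
        push_neg at hB
        have h2 : ∀ x ∈ s, 2 ≤ degS G s x := fun x hx => hA x hx
        have hno2 : ∀ x ∈ s, ∀ y ∈ s, G.toSimpleGraph.Adj x y →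
            degS G s x = 2 → degS G s y = 2 → False :=
          fun x hx y hy ha d1 d2 => hB x hx y hy ha d1 d2
        obtain ⟨u, hus, hud3, hut⟩ :=
          exists_config G s (sum_deg_lt G hmad s hne) h2 hno2
        haveI : Nonempty V := ⟨u⟩
        set T := s.filter (fun y => G.toSimpleGraph.Adj u y ∧ degS G s y = 2) with hT
        set R := s.filter (fun y => G.toSimpleGraph.Adj u y ∧ ¬ degS G s y = 2) with hR
        have hTR : T.card + R.card = degS G s u := by
          unfold degS
          rw [hT, hR, ← Finset.filter_filter, ← Finset.filter_filter]
          exact Finset.card_filter_add_card_filter_not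
            (p := fun y => degS G s y = 2)
        have htut : tS G s u = T.card := by rw [hT]; rfl
        have hineq : 2 * degS G s u ≤ T.card + 5 := htut ▸ hut
        have hRle : R.card ≤ 2 := by omega
        have hTpos : 1 ≤ T.card := by omega
        obtain ⟨v, hvT⟩ := Finset.card_pos.mp hTpos
        have hvT' := Finset.mem_filter.mp hvT
        have hvs := hvT'.1
        have hadjuv := hvT'.2.1
        have hdv := hvT'.2.2
        have huv : u ≠ v := hadjuv.ne
        have hcard' : (s.erase v).card ≤ n := by
          rw [Finset.card_erase_of_mem hvs]; omega
        obtain ⟨h, hh⟩ := IH (s.erase v) hcard'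
        have hzex : ∀ w ∈ T, ∃ z, z ∈ s ∧ G.toSimpleGraph.Adj w z ∧ z ≠ u ∧
            ∀ q ∈ s, G.toSimpleGraph.Adj w q → q = u ∨ q = z := by
          intro w hw
          have hw' := Finset.mem_filter.mp hw
          exact two_nbrs G hw'.2.2 hus hw'.2.1.symm
        choose! z hz1 hz2 hz3 hz4 using hzex
        have hbuex : ∀ w ∈ T, ∃ b : Bool, ∀ A X : C,
            Ed G u w A X ↔ cstB b A X = true :=
          fun w hw => ed_bool G (Finset.mem_filter.mp hw).2.1
        choose! bu hbu using hbuex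
        have hbzex : ∀ w ∈ T, ∃ b : Bool, ∀ A X : C,
            Ed G (z w) w A X ↔ cstB b A X = true :=
          fun w hw => ed_bool G (hz2 w hw).symm
        choose! bz hbz using hbzex
        have hbrex : ∀ y ∈ R, ∃ b : Bool, ∀ A X : C,
            Ed G y u A X ↔ cstB b A X = true :=
          fun y hy => ed_bool G (Finset.mem_filter.mp hy).2.1.symm
        choose! br hbr using hbrex
        have hzv : ∀ w ∈ T, z w ≠ v := by
          intro w hw he
          have hw' := Finset.mem_filter.mp hw
          have hadj := hz2 w hw
          rw [he] at hadj
          by_cases hwv : w = v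
          · rw [hwv] at hadj
            exact G.toSimpleGraph.loopless.irrefl v hadj
          · exact hno2 w hw'.1 v hvs hadj hw'.2.2 hdv
        obtain ⟨L, hLcard, hLprop⟩ : ∃ L : Finset C, T.card < L.card ∧
            ∀ X ∈ L, ∀ y ∈ R, Ed G y u (h y) X := by
          have hcase : R.card = 0 ∨ R.card = 1 ∨ R.card = 2 := by omega
          rcases hcase with h0 | h1 | h2c
          · refine ⟨Finset.univ, by rw [cardC]; omega, fun X _ y hy => ?_⟩
            rw [Finset.card_eq_zero.mp h0] at hy
            exact absurd hy (Finset.notMem_empty y)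
          · obtain ⟨y0, hy0⟩ := Finset.card_eq_one.mp h1
            have hy0R : y0 ∈ R := hy0 ▸ Finset.mem_singleton_self y0
            refine ⟨Nb (br y0) (h y0), by rw [F0]; omega, fun X hX y hy => ?_⟩
            have hyy : y = y0 := by
              rw [hy0] at hy
              simpa using hy
            subst hyy
            exact (hbr y hy0R (h y) X).mpr (mem_Nb.mp hX)
          · obtain ⟨y1, y2, hy12, hyR⟩ := Finset.card_eq_two.mp h2c
            have hy1R : y1 ∈ R := by rw [hyR]; simp
            have hy2R : y2 ∈ R := by rw [hyR]; simp
            have hR_s' : ∀ y ∈ R, y ∈ s.erase v := by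
              intro y hy
              have hy' := Finset.mem_filter.mp hy
              exact Finset.mem_erase.mpr ⟨fun he => hy'.2.2 (he ▸ hdv), hy'.1⟩
            have hus' : u ∈ s.erase v := Finset.mem_erase.mpr ⟨huv, hus⟩
            have hEdy : ∀ y ∈ R, Ed G y u (h y) (h u) := fun y hy =>
              ⟨fun ha => hh y (hR_s' y hy) u hus' ha,
               fun ha => hh u hus' y (hR_s' y hy) ha⟩
            have hmem : h u ∈ Nb2 (br y1) (br y2) (h y1) (h y2) :=
              mem_Nb2.mpr ⟨(hbr y1 hy1R _ _).mp (hEdy y1 hy1R),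
                (hbr y2 hy2R _ _).mp (hEdy y2 hy2R)⟩
            refine ⟨Nb2 (br y1) (br y2) (h y1) (h y2), ?_, fun X hX y hy => ?_⟩
            · have := F2 (br y1) (br y2) (h y1) (h y2) ⟨h u, hmem⟩
              omega
            · have hX' := mem_Nb2.mp hX
              rw [hyR] at hy
              rcases Finset.mem_insert.mp hy with rfl | hy'
              · exact (hbr y hy1R _ _).mpr hX'.1
              · have hyy : y = y2 := Finset.mem_singleton.mp hy'
                subst hyy
                exact (hbr y hy2R _ _).mpr hX'.2
        obtain ⟨X, hXL, hXT⟩ := exists_good T bu bz (fun w => h (z w)) L hLcard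
        choose! Y hY1 hY2 using hXT
        have EdUW : ∀ w ∈ T, Ed G u w X (Y w) :=
          fun w hw => (hbu w hw X (Y w)).mpr (hY1 w hw)
        have EdZW : ∀ w ∈ T, Ed G (z w) w (h (z w)) (Y w) :=
          fun w hw => (hbz w hw _ _).mpr (hY2 w hw)
        have huT : u ∉ T := fun hmem =>
          G.toSimpleGraph.loopless.irrefl u (Finset.mem_filter.mp hmem).2.1
        refine ⟨fun x => if x = u then X else if x ∈ T then Y x else h x,
          fun p hp q hq hpq => ?_⟩
        by_cases hpu : p = u
        · have hpq' : G.adj u q := hpu ▸ hpq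
          have hqu : q ≠ u := fun he => G.irrefl' u (he ▸ hpq')
          by_cases hqT : q ∈ T
          · simp only [if_pos hpu, if_neg hqu, if_pos hqT]
            exact (EdUW q hqT).1 hpq'
          · have hqR : q ∈ R := Finset.mem_filter.mpr ⟨hq, Or.inl hpq',
              fun hd2 => hqT (Finset.mem_filter.mpr ⟨hq, Or.inl hpq', hd2⟩)⟩
            simp only [if_pos hpu, if_neg hqu, if_neg hqT]
            exact (hLprop X hXL q hqR).2 hpq'
        · by_cases hqu : q = u
          · have hpq' : G.adj p u := hqu ▸ hpq
            by_cases hpT : p ∈ T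
            · simp only [if_pos hqu, if_neg hpu, if_pos hpT]
              exact (EdUW p hpT).2 hpq'
            · have hpR : p ∈ R := Finset.mem_filter.mpr ⟨hp, Or.inr hpq',
                fun hd2 => hpT (Finset.mem_filter.mpr ⟨hp, Or.inr hpq', hd2⟩)⟩
              simp only [if_pos hqu, if_neg hpu, if_neg hpT]
              exact (hLprop X hXL p hpR).1 hpq'
          · by_cases hpT : p ∈ T
            · have hqzp : q = z p := (hz4 p hpT q hq (Or.inl hpq)).resolve_left hqu
              subst hqzp
              have hqT : z p ∉ T := fun hmem =>
                hno2 p (Finset.mem_filter.mp hpT).1 (z p) (hz1 p hpT) (hz2 p hpT)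
                  (Finset.mem_filter.mp hpT).2.2 (Finset.mem_filter.mp hmem).2.2
              simp only [if_neg hpu, if_pos hpT, if_neg hqu, if_neg hqT]
              exact (EdZW p hpT).2 hpq
            · by_cases hqT : q ∈ T
              · have hpzq : p = z q := (hz4 q hqT p hp (Or.inr hpq)).resolve_left hpu
                subst hpzq
                simp only [if_neg hpu, if_neg hpT, if_neg hqu, if_pos hqT]
                exact (EdZW q hqT).1 hpq
              · have hpv : p ≠ v := fun he => hpT (he ▸ hvT)
                have hqv : q ≠ v := fun he => hqT (he ▸ hvT)
                simp only [if_neg hpu, if_neg hpT, if_neg hqu, if_neg hqT]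
                exact hh p (Finset.mem_erase.mpr ⟨hpv, hp⟩) q
                  (Finset.mem_erase.mpr ⟨hqv, hq⟩) hpq

end PP

namespace PP

lemma hom_of_atB {V : Type*} (G : OrientedGraph V) (h : V → C)
    (hh : ∀ u v, G.adj u v → atB (h u) (h v) = true) :
    ∃ f : V → ZMod 7, G.IsPushableHom Pal7 f := by
  refine ⟨fun v => (h v).1, ⟨{v | (h v).2 = true}, ?_⟩⟩
  rintro u v (⟨hiff, hadj⟩ | ⟨hiff, hadj⟩)
  · have hb : (h u).2 = (h v).2 := by
      simp only [Set.mem_setOf_eq] at hiff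
      cases h1 : (h u).2 <;> cases h2 : (h v).2 <;> simp_all
    have hat := hh u v hadj
    refine (pal_iff (h u).1 (h v).1).mpr ?_
    simpa [atB, hb] using hat
  · have hb : (h u).2 ≠ (h v).2 := by
      simp only [Set.mem_setOf_eq] at hiff
      cases h1 : (h u).2 <;> cases h2 : (h v).2 <;> simp_all
    have hat := hh v u hadj
    refine (pal_iff (h u).1 (h v).1).mpr ?_
    have hb' : ((h v).2 == (h u).2) = false := by
      cases h1 : (h u).2 <;> cases h2 : (h v).2 <;> simp_all
    simpa [atB, hb'] using hat

end PP



/-- Every oriented graph whose underlying graph has maximum average degree `< 3`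
admits a pushable homomorphism to `Pal7`. -/
theorem mad_lt_three_pushableHom_pal7
    (V : Type) [Fintype V] (G : OrientedGraph V)
    (hmad : MadLT3 G.toSimpleGraph) :
    ∃ f : V → ZMod 7, G.IsPushableHom Pal7 f := by
  obtain ⟨h, hh⟩ := PP.colorable G hmad (Finset.univ : Finset V).card Finset.univ le_rfl
  exact PP.hom_of_atB G h
    (fun u v huv => hh u (Finset.mem_univ u) v (Finset.mem_univ v) huv)
end

section
/- Let H→ be an oriented graph whose underlying graph H satisfies mad(H) < 3, suppose H→ admits no pushable homomorphism to the Paley tournament Pal_7, and suppose every oriented graph with strictly fewer vertices whose underlying graph has maximum average degree less than 3 does admit a pushable homomorphism to Pal_7. Then every vertex of H has degree at least 2, and every neighbor of a vertex of degree 2 in H has degree at least 4. -/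
namespace PushAux

/-- the induced oriented subgraph on a subtype -/
def restrict {V : Type*} (H : OrientedGraph V) (p : V → Prop) : OrientedGraph {x // p x} :=
  ⟨fun a b => H.adj a b, fun a h => H.irrefl' a h, fun a b h h' => H.asymm' a b h h'⟩

lemma madLT3_restrict {V : Type*} (H : OrientedGraph V) (p : V → Prop)
    (h : MadLT3 H.toSimpleGraph) : MadLT3 (restrict H p).toSimpleGraph := by
  intro K hK
  let φ : (restrict H p).toSimpleGraph →g H.toSimpleGraph :=
    ⟨Subtype.val, fun hxy => hxy⟩
  have hinj : Function.Injective (Subtype.val : {x // p x} → V) := Subtype.val_injective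
  have h1 : (K.map φ).verts.ncard = K.verts.ncard := by
    simp only [SimpleGraph.Subgraph.map_verts]
    exact Set.ncard_image_of_injective _ hinj
  have h2 : (K.map φ).edgeSet.ncard = K.edgeSet.ncard := by
    have he : (K.map φ).edgeSet = Sym2.map Subtype.val '' K.edgeSet := by
      ext e
      induction e using Sym2.ind with
      | _ x y =>
        simp only [SimpleGraph.Subgraph.mem_edgeSet, SimpleGraph.Subgraph.map_adj,
          Relation.Map, Set.mem_image]
        constructor
        · rintro ⟨a, b, hab, rfl, rfl⟩
          exact ⟨s(a, b), by simpa using hab, rfl⟩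
        · rintro ⟨e', he', hmap⟩
          induction e' using Sym2.ind with
          | _ a b =>
            simp only [Sym2.map_pair_eq, Sym2.eq, Sym2.rel_iff', Prod.mk.injEq,
              Prod.swap_prod_mk] at hmap
            rcases hmap with ⟨rfl, rfl⟩ | ⟨rfl, rfl⟩
            · exact ⟨a, b, by simpa using he', rfl, rfl⟩
            · exact ⟨b, a, by simpa using (K.adj_symm (by simpa using he')), rfl, rfl⟩
    rw [he, Set.ncard_image_of_injective _ (Sym2.map.injective hinj)]
  have h3 := h (K.map φ) (by
    obtain ⟨x, hx⟩ := hK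
    exact ⟨x.val, ⟨x, hx, rfl⟩⟩)
  omega

lemma push_transfer {V : Type*} (H : OrientedGraph V) (p : V → Prop) (S : Set {x // p x})
    (T : Set V) (f : {x // p x} → ZMod 7) (g : V → ZMod 7)
    (hf : OrientedGraph.IsHom ((restrict H p).push S) Pal7 f)
    (a b : V) (ha : p a) (hb : p b) (hga : g a = f ⟨a, ha⟩) (hgb : g b = f ⟨b, hb⟩)
    (hTa : a ∈ T ↔ (⟨a, ha⟩ : {x // p x}) ∈ S) (hTb : b ∈ T ↔ (⟨b, hb⟩ : {x // p x}) ∈ S)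
    (hadj : (H.push T).adj a b) : Pal7.adj (g a) (g b) := by
  rw [hga, hgb]
  rcases hadj with ⟨h1, h2⟩ | ⟨h1, h2⟩
  · exact hf _ _ (Or.inl ⟨by rw [← hTa, ← hTb]; exact h1, h2⟩)
  · exact hf _ _ (Or.inr ⟨by rw [← hTa, ← hTb] at *; tauto, h2⟩)

lemma push_or {V : Type*} (G : OrientedGraph V) (S : Set V) {x y : V}
    (h : G.adj x y ∨ G.adj y x) :
    (G.push S).adj x y ∨ (G.push S).adj y x := by
  by_cases hp : x ∈ S ↔ y ∈ S
  · rcases h with h | h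
    · exact Or.inl (Or.inl ⟨hp, h⟩)
    · exact Or.inr (Or.inl ⟨hp.symm, h⟩)
  · rcases h with h | h
    · exact Or.inr (Or.inr ⟨fun hc => hp hc.symm, h⟩)
    · exact Or.inl (Or.inr ⟨hp, h⟩)

/-- signed adjacency in `Pal7` -/
def pSdj (s : Bool) (x y : ZMod 7) : Prop := if s then Pal7.adj x y else Pal7.adj y x

instance : ∀ s x y, Decidable (pSdj s x y) := by
  intro s x y
  cases s <;> simp [pSdj, Pal7] <;> infer_instance

lemma palL1 : ∀ x y : ZMod 7, x ≠ y → ∀ s t : Bool, ∃ c, pSdj s x c ∧ pSdj t y c := by decide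

lemma palL2 : ∀ (x : ZMod 7) (s : Bool), ∃ c, pSdj s x c := by decide

lemma palM : ∀ (x₁ x₂ cw y : ZMod 7) (t₁ t₂ r : Bool),
    pSdj t₁ x₁ cw → pSdj t₂ x₂ cw →
    ∃ (c : ZMod 7) (b : Bool),
      pSdj (b ^^ t₁) x₁ c ∧ pSdj (b ^^ t₂) x₂ c ∧ (c ≠ y ∨ b = r) := by
  decide

end PushAux

set_option maxHeartbeats 1000000 in
open PushAux in
/-- If `H` is a minimum counterexample among oriented graphs with mad `< 3` to
admitting a pushable homomorphism to `Pal7`, then `H` has minimum degree at least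
`2` and every neighbor of a degree-`2` vertex has degree at least `4`. -/
theorem mad_min_counterexample_degrees
    (V : Type) [Fintype V] (H : OrientedGraph V)
    (hmad : MadLT3 H.toSimpleGraph)
    (hno : ¬ ∃ f : V → ZMod 7, H.IsPushableHom Pal7 f)
    (hmin : ∀ (W : Type) [Fintype W] (G : OrientedGraph W),
      Fintype.card W < Fintype.card V → MadLT3 G.toSimpleGraph →
      ∃ f : W → ZMod 7, G.IsPushableHom Pal7 f) :
    (∀ v, 2 ≤ (H.toSimpleGraph.neighborSet v).ncard) ∧
    (∀ v w, (H.toSimpleGraph.neighborSet v).ncard = 2 →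
      H.toSimpleGraph.Adj v w → 4 ≤ (H.toSimpleGraph.neighborSet w).ncard) := by
  classical
  have key : ∀ v : V, ∃ (f : {x : V // x ≠ v} → ZMod 7) (S : Set {x : V // x ≠ v}),
      OrientedGraph.IsHom ((restrict H (· ≠ v)).push S) Pal7 f := by
    intro v
    obtain ⟨f, S, hf⟩ := hmin {x : V // x ≠ v} (restrict H (· ≠ v))
        (Fintype.card_subtype_lt (x := v) (by simp)) (madLT3_restrict H _ hmad)
    exact ⟨f, S, hf⟩
  have claim1 : ∀ v : V, 2 ≤ (H.toSimpleGraph.neighborSet v).ncard := by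
    intro v
    by_contra hcard
    push_neg at hcard
    obtain ⟨f, S, hf⟩ := key v
    set N := H.toSimpleGraph.neighborSet v with hN
    have hfin : N.Finite := Set.toFinite _
    set T : Set V := {x : V | ∃ h : x ≠ v, (⟨x, h⟩ : {x : V // x ≠ v}) ∈ S} with hT
    have hTv : v ∉ T := by rintro ⟨h, -⟩; exact h rfl
    have hTx : ∀ (x : V) (hx : x ≠ v), (x ∈ T ↔ (⟨x, hx⟩ : {x : V // x ≠ v}) ∈ S) :=
      fun x hx => ⟨fun ⟨h, hs⟩ => hs, fun hs => ⟨hx, hs⟩⟩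
    have h01 : N.ncard = 0 ∨ N.ncard = 1 := by omega
    rcases h01 with h0 | h1
    · have hNe : N = ∅ := (Set.ncard_eq_zero hfin).mp h0
      set g : V → ZMod 7 := fun x => if h : x = v then 0 else f ⟨x, h⟩ with hg
      refine hno ⟨g, T, ?_⟩
      intro a b hab
      have hH : H.adj a b ∨ H.adj b a := by
        rcases hab with ⟨-, h⟩ | ⟨-, h⟩
        · exact Or.inl h
        · exact Or.inr h
      have ha : a ≠ v := by
        rintro rfl
        have hb : b ∈ N := by
          rw [hN, SimpleGraph.mem_neighborSet]
          exact hH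
        rw [hNe] at hb
        exact hb
      have hb : b ≠ v := by
        rintro rfl
        have hb : a ∈ N := by
          rw [hN, SimpleGraph.mem_neighborSet]
          exact hH.symm
        rw [hNe] at hb
        exact hb
      exact push_transfer H _ S T f g hf a b ha hb (by rw [hg]; simp [ha])
        (by rw [hg]; simp [hb]) (hTx a ha) (hTx b hb) hab
    · obtain ⟨u, hNu⟩ := Set.ncard_eq_one.mp h1
      have huv : u ≠ v := by
        rintro rfl
        have : u ∈ N := by rw [hNu]; rfl
        exact H.toSimpleGraph.irrefl (by rwa [hN, SimpleGraph.mem_neighborSet] at this)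
      have hdir : H.adj v u ∨ H.adj u v := by
        have : u ∈ N := by rw [hNu]; rfl
        rwa [hN, SimpleGraph.mem_neighborSet] at this
      have hext : ∃ d : ZMod 7,
          ((v ∈ T ↔ u ∈ T) ∧ H.adj v u → Pal7.adj d (f ⟨u, huv⟩)) ∧
          ((v ∈ T ↔ u ∈ T) ∧ H.adj u v → Pal7.adj (f ⟨u, huv⟩) d) ∧
          (¬(v ∈ T ↔ u ∈ T) ∧ H.adj v u → Pal7.adj (f ⟨u, huv⟩) d) ∧
          (¬(v ∈ T ↔ u ∈ T) ∧ H.adj u v → Pal7.adj d (f ⟨u, huv⟩)) := by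
        by_cases hp : (v ∈ T ↔ u ∈ T) <;> rcases hdir with h | h
        · obtain ⟨d, hd⟩ := palL2 (f ⟨u, huv⟩) false
          exact ⟨d, fun _ => by simpa [pSdj] using hd,
            fun ⟨_, h2⟩ => absurd h (H.asymm' _ _ h2),
            fun ⟨h1, _⟩ => absurd hp h1, fun ⟨h1, _⟩ => absurd hp h1⟩
        · obtain ⟨d, hd⟩ := palL2 (f ⟨u, huv⟩) true
          exact ⟨d, fun ⟨_, h2⟩ => absurd h2 (H.asymm' _ _ h),
            fun _ => by simpa [pSdj] using hd,
            fun ⟨h1, _⟩ => absurd hp h1, fun ⟨h1, _⟩ => absurd hp h1⟩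
        · obtain ⟨d, hd⟩ := palL2 (f ⟨u, huv⟩) true
          exact ⟨d, fun ⟨h1, _⟩ => absurd h1 hp, fun ⟨h1, _⟩ => absurd h1 hp,
            fun _ => by simpa [pSdj] using hd,
            fun ⟨_, h2⟩ => absurd h (H.asymm' _ _ h2)⟩
        · obtain ⟨d, hd⟩ := palL2 (f ⟨u, huv⟩) false
          exact ⟨d, fun ⟨h1, _⟩ => absurd h1 hp, fun ⟨h1, _⟩ => absurd h1 hp,
            fun ⟨_, h2⟩ => absurd h2 (H.asymm' _ _ h), fun _ => by simpa [pSdj] using hd⟩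
      obtain ⟨d, hd1, hd2, hd3, hd4⟩ := hext
      set g : V → ZMod 7 := fun x => if h : x = v then d else f ⟨x, h⟩ with hg
      refine hno ⟨g, T, ?_⟩
      intro a b hab
      by_cases ha : a = v
      · subst ha
        have hbv : b ≠ a := by
          rintro rfl
          exact H.irrefl' b (by rcases hab with ⟨-, h⟩ | ⟨-, h⟩ <;> exact h)
        have hbN : b ∈ N := by
          rw [hN, SimpleGraph.mem_neighborSet]
          rcases hab with ⟨-, h⟩ | ⟨-, h⟩
          · exact Or.inl h
          · exact Or.inr h
        have hbu : b = u := by rw [hNu] at hbN; exact hbN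
        subst hbu
        rw [hg]
        show Pal7.adj (if h : a = a then d else f ⟨a, h⟩) (if h : b = a then d else f ⟨b, h⟩)
        rw [dif_pos rfl, dif_neg hbv]
        rcases hab with ⟨h1, h2⟩ | ⟨h1, h2⟩
        · exact hd1 ⟨h1, h2⟩
        · exact hd4 ⟨h1, h2⟩
      · by_cases hb : b = v
        · subst hb
          have haN : a ∈ N := by
            rw [hN, SimpleGraph.mem_neighborSet]
            rcases hab with ⟨-, h⟩ | ⟨-, h⟩
            · exact Or.inr h
            · exact Or.inl h
          have hau : a = u := by rw [hNu] at haN; exact haN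
          subst hau
          rw [hg]
          show Pal7.adj (if h : a = b then d else f ⟨a, h⟩) (if h : b = b then d else f ⟨b, h⟩)
          rw [dif_pos rfl, dif_neg ha]
          rcases hab with ⟨h1, h2⟩ | ⟨h1, h2⟩
          · exact hd2 ⟨h1.symm, h2⟩
          · exact hd3 ⟨fun hc => h1 hc.symm, h2⟩
        · exact push_transfer H _ S T f g hf a b ha hb (by rw [hg]; simp [ha])
            (by rw [hg]; simp [hb]) (hTx a ha) (hTx b hb) hab
  refine ⟨claim1, ?_⟩
  intro v w hdeg hvw
  by_contra hbig
  push_neg at hbig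
  have hbig3 : (H.toSimpleGraph.neighborSet w).ncard ≤ 3 := by omega
  have hwv : w ≠ v := fun h => H.toSimpleGraph.irrefl (h ▸ hvw)
  obtain ⟨x, y, hxy, hNv⟩ := Set.ncard_eq_two.mp hdeg
  have hwmem : w ∈ H.toSimpleGraph.neighborSet v := hvw
  obtain ⟨u, huw, hu, hNvz⟩ :
      ∃ u, u ≠ w ∧ H.toSimpleGraph.Adj v u ∧
        ∀ z, H.toSimpleGraph.Adj v z → z = u ∨ z = w := by
    rw [hNv] at hwmem
    rcases hwmem with rfl | rfl
    · refine ⟨y, fun h => hxy h.symm, ?_, ?_⟩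
      · rw [← SimpleGraph.mem_neighborSet, hNv]
        exact Or.inr rfl
      · intro z hz
        rw [← SimpleGraph.mem_neighborSet, hNv] at hz
        rw [Set.mem_insert_iff, Set.mem_singleton_iff] at hz
        tauto
    · refine ⟨x, hxy, ?_, ?_⟩
      · rw [← SimpleGraph.mem_neighborSet, hNv]
        exact Or.inl rfl
      · intro z hz
        rw [← SimpleGraph.mem_neighborSet, hNv] at hz
        rw [Set.mem_insert_iff, Set.mem_singleton_iff] at hz
        tauto
  have huv : u ≠ v := fun h => H.toSimpleGraph.irrefl (h ▸ hu)
  have hdiru : H.adj v u ∨ H.adj u v := hu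
  have hdirw : H.adj v w ∨ H.adj w v := hvw
  have hvNw : v ∈ H.toSimpleGraph.neighborSet w := hvw.symm
  have hNwfin : (H.toSimpleGraph.neighborSet w).Finite := Set.toFinite _
  have hP1 : ((H.toSimpleGraph.neighborSet w) \ {v}).ncard + 1
      = (H.toSimpleGraph.neighborSet w).ncard :=
    Set.ncard_diff_singleton_add_one hvNw hNwfin
  have hw2 := claim1 w
  have hPcard : ((H.toSimpleGraph.neighborSet w) \ {v}).ncard = 1 ∨
      ((H.toSimpleGraph.neighborSet w) \ {v}).ncard = 2 := by omega
  obtain ⟨u₁, u₂, hu₁, hu₂, hPsub⟩ :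
      ∃ u₁ u₂, u₁ ∈ (H.toSimpleGraph.neighborSet w) \ {v} ∧
        u₂ ∈ (H.toSimpleGraph.neighborSet w) \ {v} ∧
        (H.toSimpleGraph.neighborSet w) \ {v} ⊆ {u₁, u₂} := by
    rcases hPcard with h | h
    · obtain ⟨a, ha⟩ := Set.ncard_eq_one.mp h
      exact ⟨a, a, by simp [ha], by simp [ha], by simp [ha]⟩
    · obtain ⟨a, b, hab, hP⟩ := Set.ncard_eq_two.mp h
      exact ⟨a, b, by simp [hP], by simp [hP], by simp [hP]⟩
  have hu₁v : u₁ ≠ v := hu₁.2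
  have hu₂v : u₂ ≠ v := hu₂.2
  have hu₁adj : H.toSimpleGraph.Adj w u₁ := hu₁.1
  have hu₂adj : H.toSimpleGraph.Adj w u₂ := hu₂.1
  have hu₁w : u₁ ≠ w := fun h => H.toSimpleGraph.irrefl (h ▸ hu₁adj)
  have hu₂w : u₂ ≠ w := fun h => H.toSimpleGraph.irrefl (h ▸ hu₂adj)
  obtain ⟨f, S, hf⟩ := key v
  -- pushed-by-S direction between u₁ and w
  obtain ⟨t₁, ht₁⟩ : ∃ t : Bool,
      (t = true → ((((⟨u₁, hu₁v⟩ : {x : V // x ≠ v}) ∈ S ↔ (⟨w, hwv⟩ : {x : V // x ≠ v}) ∈ S) ∧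
          H.adj u₁ w) ∨
        (¬((⟨u₁, hu₁v⟩ : {x : V // x ≠ v}) ∈ S ↔ (⟨w, hwv⟩ : {x : V // x ≠ v}) ∈ S) ∧
          H.adj w u₁))) ∧
      (t = false → ((((⟨w, hwv⟩ : {x : V // x ≠ v}) ∈ S ↔ (⟨u₁, hu₁v⟩ : {x : V // x ≠ v}) ∈ S) ∧
          H.adj w u₁) ∨
        (¬((⟨w, hwv⟩ : {x : V // x ≠ v}) ∈ S ↔ (⟨u₁, hu₁v⟩ : {x : V // x ≠ v}) ∈ S) ∧
          H.adj u₁ w))) := by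
    have hG : (restrict H (· ≠ v)).adj ⟨u₁, hu₁v⟩ ⟨w, hwv⟩ ∨
        (restrict H (· ≠ v)).adj ⟨w, hwv⟩ ⟨u₁, hu₁v⟩ := by
      rcases hu₁adj with h | h
      · exact Or.inr h
      · exact Or.inl h
    rcases push_or _ S hG with h | h
    · exact ⟨true, fun _ => h, by simp⟩
    · exact ⟨false, by simp, fun _ => h⟩
  obtain ⟨t₂, ht₂⟩ : ∃ t : Bool,
      (t = true → ((((⟨u₂, hu₂v⟩ : {x : V // x ≠ v}) ∈ S ↔ (⟨w, hwv⟩ : {x : V // x ≠ v}) ∈ S) ∧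
          H.adj u₂ w) ∨
        (¬((⟨u₂, hu₂v⟩ : {x : V // x ≠ v}) ∈ S ↔ (⟨w, hwv⟩ : {x : V // x ≠ v}) ∈ S) ∧
          H.adj w u₂))) ∧
      (t = false → ((((⟨w, hwv⟩ : {x : V // x ≠ v}) ∈ S ↔ (⟨u₂, hu₂v⟩ : {x : V // x ≠ v}) ∈ S) ∧
          H.adj w u₂) ∨
        (¬((⟨w, hwv⟩ : {x : V // x ≠ v}) ∈ S ↔ (⟨u₂, hu₂v⟩ : {x : V // x ≠ v}) ∈ S) ∧
          H.adj u₂ w))) := by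
    have hG : (restrict H (· ≠ v)).adj ⟨u₂, hu₂v⟩ ⟨w, hwv⟩ ∨
        (restrict H (· ≠ v)).adj ⟨w, hwv⟩ ⟨u₂, hu₂v⟩ := by
      rcases hu₂adj with h | h
      · exact Or.inr h
      · exact Or.inl h
    rcases push_or _ S hG with h | h
    · exact ⟨true, fun _ => h, by simp⟩
    · exact ⟨false, by simp, fun _ => h⟩
  have hsd₁ : pSdj t₁ (f ⟨u₁, hu₁v⟩) (f ⟨w, hwv⟩) := by
    cases t₁
    · exact hf _ _ (ht₁.2 rfl)
    · exact hf _ _ (ht₁.1 rfl)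
  have hsd₂ : pSdj t₂ (f ⟨u₂, hu₂v⟩) (f ⟨w, hwv⟩) := by
    cases t₂
    · exact hf _ _ (ht₂.2 rfl)
    · exact hf _ _ (ht₂.1 rfl)
  -- effective direction of the arc between v and u, relative to S (v outside)
  obtain ⟨su, hQu⟩ : ∃ s : Bool,
      (s = true → (((⟨u, huv⟩ : {x : V // x ≠ v}) ∈ S ∧ H.adj v u) ∨
        ((⟨u, huv⟩ : {x : V // x ≠ v}) ∉ S ∧ H.adj u v))) ∧
      (s = false → (((⟨u, huv⟩ : {x : V // x ≠ v}) ∈ S ∧ H.adj u v) ∨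
        ((⟨u, huv⟩ : {x : V // x ≠ v}) ∉ S ∧ H.adj v u))) := by
    by_cases hus : (⟨u, huv⟩ : {x : V // x ≠ v}) ∈ S <;> rcases hdiru with h | h
    · exact ⟨true, fun _ => Or.inl ⟨hus, h⟩, by simp⟩
    · exact ⟨false, by simp, fun _ => Or.inl ⟨hus, h⟩⟩
    · exact ⟨false, by simp, fun _ => Or.inr ⟨hus, h⟩⟩
    · exact ⟨true, fun _ => Or.inr ⟨hus, h⟩, by simp⟩
  obtain ⟨sw, hQw⟩ : ∃ s : Bool,
      (s = true → (((⟨w, hwv⟩ : {x : V // x ≠ v}) ∈ S ∧ H.adj v w) ∨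
        ((⟨w, hwv⟩ : {x : V // x ≠ v}) ∉ S ∧ H.adj w v))) ∧
      (s = false → (((⟨w, hwv⟩ : {x : V // x ≠ v}) ∈ S ∧ H.adj w v) ∨
        ((⟨w, hwv⟩ : {x : V // x ≠ v}) ∉ S ∧ H.adj v w))) := by
    by_cases hws : (⟨w, hwv⟩ : {x : V // x ≠ v}) ∈ S <;> rcases hdirw with h | h
    · exact ⟨true, fun _ => Or.inl ⟨hws, h⟩, by simp⟩
    · exact ⟨false, by simp, fun _ => Or.inl ⟨hws, h⟩⟩
    · exact ⟨false, by simp, fun _ => Or.inr ⟨hws, h⟩⟩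
    · exact ⟨true, fun _ => Or.inr ⟨hws, h⟩, by simp⟩
  obtain ⟨c, b, hc₁, hc₂, hcy⟩ := palM (f ⟨u₁, hu₁v⟩) (f ⟨u₂, hu₂v⟩) (f ⟨w, hwv⟩)
    (f ⟨u, huv⟩) t₁ t₂ (su ^^ sw) hsd₁ hsd₂
  obtain ⟨d, hdu, hdw⟩ : ∃ d, pSdj su (f ⟨u, huv⟩) d ∧ pSdj (b ^^ sw) c d := by
    by_cases hceq : c = f ⟨u, huv⟩
    · have hb : b = (su ^^ sw) := by
        rcases hcy with h | h
        · exact absurd hceq h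
        · exact h
      obtain ⟨d, hd⟩ := palL2 (f ⟨u, huv⟩) su
      refine ⟨d, hd, ?_⟩
      rw [hceq, hb]
      have hxx : ((su ^^ sw) ^^ sw) = su := by cases su <;> cases sw <;> rfl
      rw [hxx]
      exact hd
    · obtain ⟨d, hd1, hd2⟩ := palL1 (f ⟨u, huv⟩) c (fun h => hceq h.symm) su (b ^^ sw)
      exact ⟨d, hd1, hd2⟩
  set f₂ : {x : V // x ≠ v} → ZMod 7 := Function.update f ⟨w, hwv⟩ c with hf₂
  set T : Set V :=
      {x : V | ∃ h : x ≠ v, Xor' ((⟨x, h⟩ : {x : V // x ≠ v}) ∈ S) (b = true ∧ x = w)}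
    with hT
  have hTv : v ∉ T := fun ⟨h, _⟩ => h rfl
  have hTw : w ∈ T ↔ Xor' ((⟨w, hwv⟩ : {x : V // x ≠ v}) ∈ S) (b = true) := by
    constructor
    · rintro ⟨h, hx⟩
      simpa [Xor'] using hx
    · intro hx
      exact ⟨hwv, by simpa [Xor'] using hx⟩
  have hTx : ∀ (x : V) (hx : x ≠ v), x ≠ w →
      (x ∈ T ↔ (⟨x, hx⟩ : {x : V // x ≠ v}) ∈ S) := by
    intro x hx hxw
    constructor
    · rintro ⟨h, hs⟩
      simpa [Xor', Xor, hxw] using hs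
    · intro hs
      exact ⟨hx, by simpa [Xor', Xor, hxw] using hs⟩
  set g : V → ZMod 7 := fun x => if h : x = v then d else f₂ ⟨x, h⟩ with hg
  have hgv : g v = d := by rw [hg]; simp
  have hgw : g w = c := by
    rw [hg, hf₂]
    simp [hwv]
  have hgx : ∀ (x : V) (hx : x ≠ v), x ≠ w → g x = f ⟨x, hx⟩ := by
    intro x hx hxw
    have hne : (⟨x, hx⟩ : {x : V // x ≠ v}) ≠ ⟨w, hwv⟩ :=
      fun hh => hxw (congrArg Subtype.val hh)
    rw [hg, hf₂]
    simp [hx, Function.update_of_ne hne]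
  refine hno ⟨g, T, ?_⟩
  intro a b₂ hab
  have hA := H.asymm' a b₂
  have hB := H.asymm' b₂ a
  have habH : H.adj a b₂ ∨ H.adj b₂ a := by
    rcases hab with ⟨_, h⟩ | ⟨_, h⟩
    · exact Or.inl h
    · exact Or.inr h
  by_cases ha : a = v
  · subst ha
    have hb₂ : b₂ ∈ H.toSimpleGraph.neighborSet a := habH
    rcases hNvz b₂ hb₂ with rfl | rfl
    · -- arc between v and u
      rw [hgv, hgx b₂ huv huw]
      have hTu := hTx b₂ huv huw
      cases hsu : su
      · rw [hsu] at hdu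
        exact hdu
      · exfalso
        have hq := hQu.1 hsu
        rcases hab with ⟨h1, h2⟩ | ⟨h1, h2⟩ <;> rcases hq with ⟨hs, hd'⟩ | ⟨hs, hd'⟩ <;>
          clear * - hA hB h1 h2 hs hd' hTu hTv <;> tauto
    · -- arc between v and w
      rw [hgv, hgw]
      have hbst := hTw
      cases hbb : b <;> cases hss : sw <;> rw [hbb, hss] at hdw <;> rw [hbb] at hbst <;>
        simp only [Xor', Xor, Bool.false_eq_true, Bool.true_eq_false, and_true, and_false,
          not_true, not_false_iff, false_and, true_and, or_false, false_or,
          not_not, iff_true, iff_false, and_not_self_iff, not_and_self_iff] at hbst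
      · exact hdw
      · exfalso
        have hq := hQw.1 hss
        rcases hab with ⟨h1, h2⟩ | ⟨h1, h2⟩ <;> rcases hq with ⟨hs, hd'⟩ | ⟨hs, hd'⟩ <;>
          clear * - hA hB h1 h2 hs hd' hbst hTv <;> tauto
      · exfalso
        have hq := hQw.2 hss
        rcases hab with ⟨h1, h2⟩ | ⟨h1, h2⟩ <;> rcases hq with ⟨hs, hd'⟩ | ⟨hs, hd'⟩ <;>
          clear * - hA hB h1 h2 hs hd' hbst hTv <;> tauto
      · exact hdw
  · by_cases hb : b₂ = v
    · subst hb
      have ha' : a ∈ H.toSimpleGraph.neighborSet b₂ := by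
        rw [SimpleGraph.mem_neighborSet]
        exact habH.symm
      rcases hNvz a ha' with rfl | rfl
      · -- arc between u and v
        rw [hgv, hgx a huv huw]
        have hTu := hTx a huv huw
        cases hsu : su
        · exfalso
          have hq := hQu.2 hsu
          rcases hab with ⟨h1, h2⟩ | ⟨h1, h2⟩ <;> rcases hq with ⟨hs, hd'⟩ | ⟨hs, hd'⟩ <;>
            clear * - hA hB h1 h2 hs hd' hTu hTv <;> tauto
        · rw [hsu] at hdu
          exact hdu
      · -- arc between w and v
        rw [hgv, hgw]
        have hbst := hTw
        cases hbb : b <;> cases hss : sw <;> rw [hbb, hss] at hdw <;> rw [hbb] at hbst <;>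
          simp only [Xor', Xor, Bool.false_eq_true, Bool.true_eq_false, and_true, and_false,
            not_true, not_false_iff, false_and, true_and, or_false, false_or,
            not_not, iff_true, iff_false, and_not_self_iff, not_and_self_iff] at hbst
        · exfalso
          have hq := hQw.2 hss
          rcases hab with ⟨h1, h2⟩ | ⟨h1, h2⟩ <;> rcases hq with ⟨hs, hd'⟩ | ⟨hs, hd'⟩ <;>
            clear * - hA hB h1 h2 hs hd' hbst hTv <;> tauto
        · exact hdw
        · exact hdw
        · exfalso
          have hq := hQw.1 hss
          rcases hab with ⟨h1, h2⟩ | ⟨h1, h2⟩ <;> rcases hq with ⟨hs, hd'⟩ | ⟨hs, hd'⟩ <;>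
            clear * - hA hB h1 h2 hs hd' hbst hTv <;> tauto
    · by_cases haw : a = w
      · subst haw
        have hb₂w : b₂ ≠ a := fun h =>
          H.toSimpleGraph.irrefl (h ▸ (habH : H.toSimpleGraph.Adj a b₂))
        have hb₂P : b₂ ∈ (H.toSimpleGraph.neighborSet a) \ {v} := ⟨habH, hb⟩
        rw [hgw]
        rcases hPsub hb₂P with rfl | rfl
        · -- arc with w → pushed-T direction, other endpoint u₁
          rw [hgx b₂ hu₁v hu₁w]
          have hTu := hTx b₂ hu₁v hu₁w
          have hbst := hTw
          cases hbb : b <;> cases htt : t₁ <;> rw [hbb, htt] at hc₁ <;> rw [hbb] at hbst <;>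
            simp only [Xor', Xor, Bool.false_eq_true, Bool.true_eq_false, and_true, and_false,
              not_true, not_false_iff, false_and, true_and, or_false, false_or,
              not_not, iff_true, iff_false, and_not_self_iff, not_and_self_iff] at hbst
          · exact hc₁
          · exfalso
            have hq := ht₁.1 htt
            rcases hq with ⟨hp, hd'⟩ | ⟨hp, hd'⟩ <;>
              rcases hab with ⟨h1, h2⟩ | ⟨h1, h2⟩ <;>
              clear * - hA hB h1 h2 hp hd' hbst hTu <;> tauto
          · exfalso
            have hq := ht₁.2 htt
            rcases hq with ⟨hp, hd'⟩ | ⟨hp, hd'⟩ <;>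
              rcases hab with ⟨h1, h2⟩ | ⟨h1, h2⟩ <;>
              clear * - hA hB h1 h2 hp hd' hbst hTu <;> tauto
          · exact hc₁
        · rw [hgx b₂ hu₂v hu₂w]
          have hTu := hTx b₂ hu₂v hu₂w
          have hbst := hTw
          cases hbb : b <;> cases htt : t₂ <;> rw [hbb, htt] at hc₂ <;> rw [hbb] at hbst <;>
            simp only [Xor', Xor, Bool.false_eq_true, Bool.true_eq_false, and_true, and_false,
              not_true, not_false_iff, false_and, true_and, or_false, false_or,
              not_not, iff_true, iff_false, and_not_self_iff, not_and_self_iff] at hbst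
          · exact hc₂
          · exfalso
            have hq := ht₂.1 htt
            rcases hq with ⟨hp, hd'⟩ | ⟨hp, hd'⟩ <;>
              rcases hab with ⟨h1, h2⟩ | ⟨h1, h2⟩ <;>
              clear * - hA hB h1 h2 hp hd' hbst hTu <;> tauto
          · exfalso
            have hq := ht₂.2 htt
            rcases hq with ⟨hp, hd'⟩ | ⟨hp, hd'⟩ <;>
              rcases hab with ⟨h1, h2⟩ | ⟨h1, h2⟩ <;>
              clear * - hA hB h1 h2 hp hd' hbst hTu <;> tauto
          · exact hc₂
      · by_cases hbw : b₂ = w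
        · subst hbw
          have haP : a ∈ (H.toSimpleGraph.neighborSet b₂) \ {v} :=
            ⟨habH.symm, ha⟩
          rw [hgw]
          rcases hPsub haP with rfl | rfl
          · rw [hgx a hu₁v hu₁w]
            have hTu := hTx a hu₁v hu₁w
            have hbst := hTw
            cases hbb : b <;> cases htt : t₁ <;> rw [hbb, htt] at hc₁ <;> rw [hbb] at hbst <;>
              simp only [Xor', Xor, Bool.false_eq_true, Bool.true_eq_false, and_true, and_false,
                not_true, not_false_iff, false_and, true_and, or_false, false_or,
                not_not, iff_true, iff_false, and_not_self_iff, not_and_self_iff] at hbst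
            · exfalso
              have hq := ht₁.2 htt
              rcases hq with ⟨hp, hd'⟩ | ⟨hp, hd'⟩ <;>
                rcases hab with ⟨h1, h2⟩ | ⟨h1, h2⟩ <;>
                clear * - hA hB h1 h2 hp hd' hbst hTu <;> tauto
            · exact hc₁
            · exact hc₁
            · exfalso
              have hq := ht₁.1 htt
              rcases hq with ⟨hp, hd'⟩ | ⟨hp, hd'⟩ <;>
                rcases hab with ⟨h1, h2⟩ | ⟨h1, h2⟩ <;>
                clear * - hA hB h1 h2 hp hd' hbst hTu <;> tauto
          · rw [hgx a hu₂v hu₂w]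
            have hTu := hTx a hu₂v hu₂w
            have hbst := hTw
            cases hbb : b <;> cases htt : t₂ <;> rw [hbb, htt] at hc₂ <;> rw [hbb] at hbst <;>
              simp only [Xor', Xor, Bool.false_eq_true, Bool.true_eq_false, and_true, and_false,
                not_true, not_false_iff, false_and, true_and, or_false, false_or,
                not_not, iff_true, iff_false, and_not_self_iff, not_and_self_iff] at hbst
            · exfalso
              have hq := ht₂.2 htt
              rcases hq with ⟨hp, hd'⟩ | ⟨hp, hd'⟩ <;>
                rcases hab with ⟨h1, h2⟩ | ⟨h1, h2⟩ <;>
                clear * - hA hB h1 h2 hp hd' hbst hTu <;> tauto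
            · exact hc₂
            · exact hc₂
            · exfalso
              have hq := ht₂.1 htt
              rcases hq with ⟨hp, hd'⟩ | ⟨hp, hd'⟩ <;>
                rcases hab with ⟨h1, h2⟩ | ⟨h1, h2⟩ <;>
                clear * - hA hB h1 h2 hp hd' hbst hTu <;> tauto
        · exact push_transfer H _ S T f g hf a b₂ ha hb (hgx a ha haw) (hgx b₂ hb hbw)
            (hTx a ha haw) (hTx b₂ hb hbw) hab
end

section
/- Let H→ be an oriented graph whose underlying graph H has maximum degree at most 3, suppose H→ admits no pushable homomorphism to the Paley tournament Pal_7, and suppose every oriented graph with strictly fewer vertices whose underlying graph has maximum degree at most 3 does admit a pushable homomorphism to Pal_7. Then H is 3-regular: every vertex of H has degree exactly 3. -/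
instance pal7Dec (i j : ZMod 7) : Decidable (Pal7.adj i j) :=
  inferInstanceAs (Decidable (j - i = 1 ∨ j - i = 2 ∨ j - i = 4))

lemma pal7_pair_bool : ∀ (x y : ZMod 7), x ≠ y → ∀ (b₁ b₂ : Bool),
    ∃ c : ZMod 7, (b₁ = true → Pal7.adj x c) ∧ (b₁ = false → Pal7.adj c x) ∧
      (b₂ = true → Pal7.adj y c) ∧ (b₂ = false → Pal7.adj c y) := by decide

lemma pal7_single_bool : ∀ (x : ZMod 7) (b : Bool),
    ∃ c : ZMod 7, (b = true → Pal7.adj x c) ∧ (b = false → Pal7.adj c x) := by decide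

lemma pal7_single (x : ZMod 7) (P : Prop) :
    ∃ c : ZMod 7, (P → Pal7.adj x c) ∧ (¬P → Pal7.adj c x) := by
  classical
  by_cases hP : P
  · obtain ⟨c, h1, _⟩ := pal7_single_bool x true
    exact ⟨c, fun _ => h1 rfl, fun h => absurd hP h⟩
  · obtain ⟨c, _, h2⟩ := pal7_single_bool x false
    exact ⟨c, fun h => absurd h hP, fun _ => h2 rfl⟩

lemma pal7_pair (x y : ZMod 7) (h : x ≠ y) (P Q : Prop) :
    ∃ c : ZMod 7, (P → Pal7.adj x c) ∧ (¬P → Pal7.adj c x) ∧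
      (Q → Pal7.adj y c) ∧ (¬Q → Pal7.adj c y) := by
  classical
  by_cases hP : P <;> by_cases hQ : Q
  · obtain ⟨c, h1, _, h3, _⟩ := pal7_pair_bool x y h true true
    exact ⟨c, fun _ => h1 rfl, fun h' => absurd hP h', fun _ => h3 rfl, fun h' => absurd hQ h'⟩
  · obtain ⟨c, h1, _, _, h4⟩ := pal7_pair_bool x y h true false
    exact ⟨c, fun _ => h1 rfl, fun h' => absurd hP h', fun h' => absurd h' hQ, fun _ => h4 rfl⟩
  · obtain ⟨c, _, h2, h3, _⟩ := pal7_pair_bool x y h false true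
    exact ⟨c, fun h' => absurd h' hP, fun _ => h2 rfl, fun _ => h3 rfl, fun h' => absurd hQ h'⟩
  · obtain ⟨c, _, h2, _, h4⟩ := pal7_pair_bool x y h false false
    exact ⟨c, fun h' => absurd h' hP, fun _ => h2 rfl, fun h' => absurd h' hQ, fun _ => h4 rfl⟩

lemma push_pres {V : Type*} (G : OrientedGraph V) (S : Set V) {a b : V} (h : G.adj a b) :
    (G.push S).adj a b ∨ (G.push S).adj b a := by
  by_cases m : a ∈ S ↔ b ∈ S
  · exact Or.inl (Or.inl ⟨m, h⟩)
  · exact Or.inr (Or.inr ⟨fun m' => m m'.symm, h⟩)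

/-- Extension lemma: a pushable hom on `V \ {v}` that respects arcs of `H` extends to `V`
provided a color `c` compatible with all pushed arcs at `v` exists. -/
lemma extend_hom {V : Type} (H : OrientedGraph V) (v : V)
    (G' : OrientedGraph {u : V // u ≠ v})
    (hsub : ∀ a b : {u : V // u ≠ v}, H.adj a.1 b.1 → G'.adj a b)
    (f' : {u : V // u ≠ v} → ZMod 7) (S' : Set {u : V // u ≠ v})
    (h' : OrientedGraph.IsHom (G'.push S') Pal7 f')
    (c : ZMod 7)
    (hc : ∀ (u : V) (hu : u ≠ v),
      (((⟨u, hu⟩ ∈ S' ∧ H.adj v u) ∨ (⟨u, hu⟩ ∉ S' ∧ H.adj u v)) →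
          Pal7.adj (f' ⟨u, hu⟩) c) ∧
      (((⟨u, hu⟩ ∉ S' ∧ H.adj v u) ∨ (⟨u, hu⟩ ∈ S' ∧ H.adj u v)) →
          Pal7.adj c (f' ⟨u, hu⟩))) :
    ∃ f : V → ZMod 7, H.IsPushableHom Pal7 f := by
  classical
  set T : Set V := {u | ∃ hu : u ≠ v, (⟨u, hu⟩ : {u : V // u ≠ v}) ∈ S'} with hT
  have hvT : v ∉ T := fun ⟨hu, _⟩ => hu rfl
  have hmem : ∀ (u : V) (hu : u ≠ v), (u ∈ T ↔ ⟨u, hu⟩ ∈ S') := by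
    intro u hu
    exact ⟨fun ⟨hu', hm⟩ => hm, fun hm => ⟨hu, hm⟩⟩
  refine ⟨fun u => if hu : u = v then c else f' ⟨u, hu⟩, T, ?_⟩
  intro a b hab
  by_cases ha : v = a
  · subst ha
    have hb : b ≠ v := by
      intro h
      rw [h] at hab
      exact (H.push T).irrefl' _ hab
    simp only [dif_pos rfl, dif_neg hb]
    rcases hab with ⟨hiff, hadj⟩ | ⟨hniff, hadj⟩
    · have hbT : (⟨b, hb⟩ : {u : V // u ≠ v}) ∉ S' :=
        fun hm => hvT (hiff.mpr ((hmem b hb).mpr hm))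
      exact (hc b hb).2 (Or.inl ⟨hbT, hadj⟩)
    · have hbT : b ∈ T := by
        by_contra hm
        exact hniff (iff_of_false hvT hm)
      exact (hc b hb).2 (Or.inr ⟨(hmem b hb).mp hbT, hadj⟩)
  · have ha' : a ≠ v := fun h => ha h.symm
    by_cases hb : v = b
    · subst hb
      simp only [dif_pos rfl, dif_neg ha']
      rcases hab with ⟨hiff, hadj⟩ | ⟨hniff, hadj⟩
      · have haT : (⟨a, ha'⟩ : {u : V // u ≠ v}) ∉ S' :=
          fun hm => hvT (hiff.mp ((hmem a ha').mpr hm))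
        exact (hc a ha').1 (Or.inr ⟨haT, hadj⟩)
      · have haT : a ∈ T := by
          by_contra hm
          exact hniff (iff_of_false hm hvT)
        exact (hc a ha').1 (Or.inl ⟨(hmem a ha').mp haT, hadj⟩)
    · have hb' : b ≠ v := fun h => hb h.symm
      simp only [dif_neg ha', dif_neg hb']
      apply h'
      rcases hab with ⟨hiff, hadj⟩ | ⟨hniff, hadj⟩
      · exact Or.inl ⟨Iff.trans (Iff.trans ((hmem a ha')).symm hiff) (hmem b hb'),
          hsub ⟨a, ha'⟩ ⟨b, hb'⟩ hadj⟩
      · refine Or.inr ⟨fun hi => hniff ?_, hsub ⟨b, hb'⟩ ⟨a, ha'⟩ hadj⟩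
        exact Iff.trans (Iff.trans (hmem a ha') hi) (hmem b hb').symm

/-- If `H` is a minimum counterexample among subcubic oriented graphs to admitting a
pushable homomorphism to `Pal7`, then `H` is cubic. -/
theorem subcubic_min_counterexample_is_cubic
    (V : Type) [Fintype V] (H : OrientedGraph V)
    (hdeg : ∀ v, (H.toSimpleGraph.neighborSet v).ncard ≤ 3)
    (hno : ¬ ∃ f : V → ZMod 7, H.IsPushableHom Pal7 f)
    (hmin : ∀ (W : Type) [Fintype W] (G : OrientedGraph W),
      Fintype.card W < Fintype.card V →
      (∀ w, (G.toSimpleGraph.neighborSet w).ncard ≤ 3) →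
      ∃ f : W → ZMod 7, G.IsPushableHom Pal7 f) :
    ∀ v, (H.toSimpleGraph.neighborSet v).ncard = 3 := by
  classical
  intro v
  by_contra hne
  have hle2 : (H.toSimpleGraph.neighborSet v).ncard ≤ 2 := by
    have := hdeg v; omega
  have hvv : v ∉ H.toSimpleGraph.neighborSet v := fun h => H.toSimpleGraph.loopless.irrefl v h
  have hcard : Fintype.card {u : V // u ≠ v} < Fintype.card V :=
    Fintype.card_subtype_lt (x := v) (fun h => h rfl)
  apply hno
  -- the plain restriction of H to V \ {v}
  let R : OrientedGraph {u : V // u ≠ v} :=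
    ⟨fun a b => H.adj a.1 b.1, fun a => H.irrefl' a.1, fun a b => H.asymm' a.1 b.1⟩
  have hRdeg : ∀ w : {u : V // u ≠ v}, (R.toSimpleGraph.neighborSet w).ncard ≤ 3 := by
    intro w
    rw [← Set.ncard_image_of_injective _ Subtype.val_injective]
    refine le_trans (Set.ncard_le_ncard ?_ (Set.toFinite _)) (hdeg w.1)
    rintro b ⟨b', hb', rfl⟩
    exact hb'
  obtain h0 | h1 | h2 : (H.toSimpleGraph.neighborSet v).ncard = 0 ∨
      (H.toSimpleGraph.neighborSet v).ncard = 1 ∨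
      (H.toSimpleGraph.neighborSet v).ncard = 2 := by omega
  · -- v is isolated
    have hemp : H.toSimpleGraph.neighborSet v = ∅ :=
      (Set.ncard_eq_zero (Set.toFinite _)).mp h0
    have hnone : ∀ u : V, ¬ (H.adj v u ∨ H.adj u v) := by
      intro u h
      have hm : u ∈ H.toSimpleGraph.neighborSet v := h
      rw [hemp] at hm
      exact hm
    obtain ⟨f', S', h'⟩ := hmin _ R hcard hRdeg
    refine extend_hom H v R (fun a b h => h) f' S' h' 0 ?_
    intro u hu
    refine ⟨?_, ?_⟩ <;> rintro (⟨-, hadj⟩ | ⟨-, hadj⟩)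
    · exact absurd (Or.inl hadj) (hnone u)
    · exact absurd (Or.inr hadj) (hnone u)
    · exact absurd (Or.inl hadj) (hnone u)
    · exact absurd (Or.inr hadj) (hnone u)
  · -- v has a single neighbor u₀
    obtain ⟨u₀, hset⟩ := Set.ncard_eq_one.mp h1
    have hu₀ : u₀ ∈ H.toSimpleGraph.neighborSet v := by rw [hset]; exact rfl
    have h₀v : u₀ ≠ v := fun h => hvv (h ▸ hu₀)
    obtain ⟨f', S', h'⟩ := hmin _ R hcard hRdeg
    obtain ⟨c, hc1, hc2⟩ := pal7_single (f' ⟨u₀, h₀v⟩)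
      ((⟨u₀, h₀v⟩ ∈ S' ∧ H.adj v u₀) ∨ (⟨u₀, h₀v⟩ ∉ S' ∧ H.adj u₀ v))
    refine extend_hom H v R (fun a b h => h) f' S' h' c ?_
    intro u hu
    have hmemv : (H.adj v u ∨ H.adj u v) → u = u₀ := by
      intro h
      have hm : u ∈ H.toSimpleGraph.neighborSet v := h
      rw [hset] at hm
      exact hm
    constructor
    · intro htrig
      obtain rfl : u = u₀ :=
        hmemv (by rcases htrig with ⟨-, h⟩ | ⟨-, h⟩; exacts [Or.inl h, Or.inr h])
      exact hc1 htrig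
    · intro htrig
      obtain rfl : u = u₀ :=
        hmemv (by rcases htrig with ⟨-, h⟩ | ⟨-, h⟩; exacts [Or.inl h, Or.inr h])
      apply hc2
      rintro (⟨hm, hadj⟩ | ⟨hm, hadj⟩) <;> rcases htrig with ⟨hm', hadj'⟩ | ⟨hm', hadj'⟩
      · exact hm' hm
      · exact H.asymm' _ _ hadj hadj'
      · exact H.asymm' _ _ hadj hadj'
      · exact hm hm'
  · -- v has exactly two neighbors u₁ ≠ u₂
    obtain ⟨u₁, u₂, h12, hset⟩ := Set.ncard_eq_two.mp h2
    have hu₁ : u₁ ∈ H.toSimpleGraph.neighborSet v := by rw [hset]; exact Or.inl rfl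
    have hu₂ : u₂ ∈ H.toSimpleGraph.neighborSet v := by rw [hset]; exact Or.inr rfl
    have h₁v : u₁ ≠ v := fun h => hvv (h ▸ hu₁)
    have h₂v : u₂ ≠ v := fun h => hvv (h ▸ hu₂)
    -- restriction of H to V \ {v}, with an extra arc u₁ → u₂ if they are not adjacent
    let G' : OrientedGraph {u : V // u ≠ v} :=
      { adj := fun a b => H.adj a.1 b.1 ∨
          (¬ H.toSimpleGraph.Adj u₁ u₂ ∧ a.1 = u₁ ∧ b.1 = u₂)
        irrefl' := by
          rintro a (h | ⟨-, h1, h2⟩)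
          · exact H.irrefl' _ h
          · exact h12 (h1.symm.trans h2)
        asymm' := by
          rintro a b (h | ⟨hna, h1, h2⟩) (h' | ⟨hna', h1', h2'⟩)
          · exact H.asymm' _ _ h h'
          · exact hna' (Or.inr (by rw [← h1', ← h2']; exact h))
          · exact hna (Or.inr (by rw [← h1, ← h2]; exact h'))
          · exact h12 (h1.symm.trans h2') }
    have hG'deg : ∀ w : {u : V // u ≠ v}, (G'.toSimpleGraph.neighborSet w).ncard ≤ 3 := by
      intro w
      rw [← Set.ncard_image_of_injective _ Subtype.val_injective]
      by_cases hw1 : w.1 = u₁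
      · have hsub : Subtype.val '' (G'.toSimpleGraph.neighborSet w) ⊆
            (H.toSimpleGraph.neighborSet u₁ \ {v}) ∪ {u₂} := by
          rintro b ⟨b', hb', rfl⟩
          rcases hb' with (h | ⟨-, -, h2⟩) | (h | ⟨-, -, hw⟩)
          · exact Or.inl ⟨Or.inl (by rw [← hw1]; exact h), b'.2⟩
          · exact Or.inr h2
          · exact Or.inl ⟨Or.inr (by rw [← hw1]; exact h), b'.2⟩
          · exact absurd (hw1.symm.trans hw) h12
        refine le_trans (Set.ncard_le_ncard hsub (Set.toFinite _)) ?_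
        refine le_trans (Set.ncard_union_le _ _) ?_
        rw [Set.ncard_singleton,
          Set.ncard_diff_singleton_of_mem (show v ∈ _ from Or.symm hu₁)]
        have := hdeg u₁; omega
      · by_cases hw2 : w.1 = u₂
        · have hsub : Subtype.val '' (G'.toSimpleGraph.neighborSet w) ⊆
              (H.toSimpleGraph.neighborSet u₂ \ {v}) ∪ {u₁} := by
            rintro b ⟨b', hb', rfl⟩
            rcases hb' with (h | ⟨-, hw, -⟩) | (h | ⟨-, h1, -⟩)
            · exact Or.inl ⟨Or.inl (by rw [← hw2]; exact h), b'.2⟩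
            · exact absurd (hw2.symm.trans hw).symm h12
            · exact Or.inl ⟨Or.inr (by rw [← hw2]; exact h), b'.2⟩
            · exact Or.inr h1
          refine le_trans (Set.ncard_le_ncard hsub (Set.toFinite _)) ?_
          refine le_trans (Set.ncard_union_le _ _) ?_
          rw [Set.ncard_singleton,
            Set.ncard_diff_singleton_of_mem (show v ∈ _ from Or.symm hu₂)]
          have := hdeg u₂; omega
        · refine le_trans (Set.ncard_le_ncard ?_ (Set.toFinite _)) (hdeg w.1)
          rintro b ⟨b', hb', rfl⟩
          rcases hb' with (h | ⟨-, hw, -⟩) | (h | ⟨-, -, hw⟩)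
          · exact Or.inl h
          · exact absurd hw hw1
          · exact Or.inr h
          · exact absurd hw hw2
    obtain ⟨f', S', h'⟩ := hmin _ G' hcard hG'deg
    have hG'adj : G'.adj ⟨u₁, h₁v⟩ ⟨u₂, h₂v⟩ ∨ G'.adj ⟨u₂, h₂v⟩ ⟨u₁, h₁v⟩ := by
      by_cases hA : H.toSimpleGraph.Adj u₁ u₂
      · rcases hA with h | h
        · exact Or.inl (Or.inl h)
        · exact Or.inr (Or.inl h)
      · exact Or.inl (Or.inr ⟨hA, rfl, rfl⟩)
    have hkey : ∀ a b : {u : V // u ≠ v}, G'.adj a b → f' a ≠ f' b := by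
      intro a b h hfeq
      rcases push_pres G' S' h with hp | hp
      · have hpp := h' _ _ hp
        rw [hfeq] at hpp
        exact Pal7.irrefl' _ hpp
      · have hpp := h' _ _ hp
        rw [hfeq] at hpp
        exact Pal7.irrefl' _ hpp
    have hxy : f' ⟨u₁, h₁v⟩ ≠ f' ⟨u₂, h₂v⟩ := by
      rcases hG'adj with h | h
      · exact hkey _ _ h
      · exact (hkey _ _ h).symm
    obtain ⟨c, hc1, hc2, hc3, hc4⟩ := pal7_pair _ _ hxy
      ((⟨u₁, h₁v⟩ ∈ S' ∧ H.adj v u₁) ∨ (⟨u₁, h₁v⟩ ∉ S' ∧ H.adj u₁ v))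
      ((⟨u₂, h₂v⟩ ∈ S' ∧ H.adj v u₂) ∨ (⟨u₂, h₂v⟩ ∉ S' ∧ H.adj u₂ v))
    refine extend_hom H v G' (fun a b h => Or.inl h) f' S' h' c ?_
    intro u hu
    have hmemv : (H.adj v u ∨ H.adj u v) → u = u₁ ∨ u = u₂ := by
      intro h
      have hm : u ∈ H.toSimpleGraph.neighborSet v := h
      rw [hset] at hm
      exact hm
    constructor
    · intro htrig
      rcases hmemv (by rcases htrig with ⟨-, h⟩ | ⟨-, h⟩; exacts [Or.inl h, Or.inr h])
        with rfl | rfl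
      · exact hc1 htrig
      · exact hc3 htrig
    · intro htrig
      rcases hmemv (by rcases htrig with ⟨-, h⟩ | ⟨-, h⟩; exacts [Or.inl h, Or.inr h])
        with rfl | rfl
      · apply hc2
        rintro (⟨hm, hadj⟩ | ⟨hm, hadj⟩) <;> rcases htrig with ⟨hm', hadj'⟩ | ⟨hm', hadj'⟩
        · exact hm' hm
        · exact H.asymm' _ _ hadj hadj'
        · exact H.asymm' _ _ hadj hadj'
        · exact hm hm'
      · apply hc4
        rintro (⟨hm, hadj⟩ | ⟨hm, hadj⟩) <;> rcases htrig with ⟨hm', hadj'⟩ | ⟨hm', hadj'⟩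
        · exact hm' hm
        · exact H.asymm' _ _ hadj hadj'
        · exact H.asymm' _ _ hadj hadj'
        · exact hm hm'
end
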